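/- arXiv:1311.4989 — 3 statements merged into one kernel-verified Lean document; each statement's English description precedes it below -/
import Mathlib

section
/- Let m ∈ ℕ, U ⊆ ℝⁿ open and convex, f₁, …, f_m : U → ℝ of class C^{1,1}, and define f : U → ℝ by f(x) = max_{i ∈ {1,…,m}} f_i(x). For x ∈ U and h ∈ ℝⁿ, set I(x) = {i ∈ {1,…,m} | f_i(x) = f(x)} and M = argmax_{i ∈ I(x)} f_i'(x)h. Then for all x ∈ U and h ∈ ℝⁿ: D̄²f(x, h²) ≥ max_{i ∈ M} D̲²f_i(x, h²). -/
set_option maxHeartbeats 1000000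

open Filter Metric Set
open scoped Topology RealInnerProductSpace NNReal

/-- The one-sided directional derivative `φ'(x; h) = lim_{t→0⁺} (φ(x + t h) - φ(x))/t`
(an arbitrary value if the limit does not exist). -/
noncomputable def posDirDeriv {n : ℕ} (φ : EuclideanSpace ℝ (Fin n) → ℝ)
    (x h : EuclideanSpace ℝ (Fin n)) : ℝ :=
  limUnder (𝓝[>] (0:ℝ)) (fun t : ℝ => (φ (x + t • h) - φ x) / t)

/-- The upper generalized second-order directional derivative
`D̄²φ(x, h²) = limsup_{t→0⁺} (φ'(x + t h; h) - φ'(x; h))/t`. -/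
noncomputable def upperD2 {n : ℕ} (φ : EuclideanSpace ℝ (Fin n) → ℝ)
    (x h : EuclideanSpace ℝ (Fin n)) : ℝ :=
  limsup (fun t : ℝ => (posDirDeriv φ (x + t • h) h - posDirDeriv φ x h) / t) (𝓝[>] (0:ℝ))

/-- The lower generalized second-order directional derivative
`D̲²φ(x, h²) = liminf_{t→0⁺} (φ'(x + t h; h) - φ'(x; h))/t`. -/
noncomputable def lowerD2 {n : ℕ} (φ : EuclideanSpace ℝ (Fin n) → ℝ)
    (x h : EuclideanSpace ℝ (Fin n)) : ℝ :=
  liminf (fun t : ℝ => (posDirDeriv φ (x + t • h) h - posDirDeriv φ x h) / t) (𝓝[>] (0:ℝ))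

/-- The difference quotient of a differentiable function tends to the directional derivative. -/
lemma aux_tendsto_quot {n : ℕ} {φ : EuclideanSpace ℝ (Fin n) → ℝ} {y : EuclideanSpace ℝ (Fin n)}
    (h : EuclideanSpace ℝ (Fin n)) (hd : DifferentiableAt ℝ φ y) :
    Tendsto (fun t : ℝ => (φ (y + t • h) - φ y) / t) (𝓝[>] (0:ℝ))
      (𝓝 (fderiv ℝ φ y h)) := by
  have hc : HasDerivAt (fun t : ℝ => y + t • h) h 0 := by
    simpa using ((hasDerivAt_id (0:ℝ)).smul_const h).const_add y
  have hD : HasDerivAt (fun t : ℝ => φ (y + t • h)) (fderiv ℝ φ y h) 0 :=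
    hd.hasFDerivAt.comp_hasDerivAt_of_eq (0:ℝ) hc (by simp)
  have h2 : Tendsto (slope (fun t : ℝ => φ (y + t • h)) 0) (𝓝[>] (0:ℝ))
      (𝓝 (fderiv ℝ φ y h)) :=
    (hasDerivAt_iff_tendsto_slope.1 hD).mono_left
      (nhdsWithin_mono _ fun t ht => ne_of_gt ht)
  refine h2.congr fun t => ?_
  simp [slope_def_field]

/-- The value of the one-sided directional derivative of a differentiable function. -/
lemma posDirDeriv_eq_fderiv {n : ℕ} {φ : EuclideanSpace ℝ (Fin n) → ℝ}
    {y : EuclideanSpace ℝ (Fin n)} (h : EuclideanSpace ℝ (Fin n))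
    (hd : DifferentiableAt ℝ φ y) :
    posDirDeriv φ y h = fderiv ℝ φ y h :=
  (aux_tendsto_quot h hd).limUnder_eq

/-- Danskin-type lemma: the difference quotient of a finite max of differentiable functions
tends to the max of the directional derivatives over the active indices. -/
lemma maxQuot_tendsto {n m : ℕ} (hm : 0 < m) {U : Set (EuclideanSpace ℝ (Fin n))}
    {f : Fin m → EuclideanSpace ℝ (Fin n) → ℝ}
    (hfd : ∀ i, ∀ x ∈ U, DifferentiableAt ℝ (f i) x)
    {F : EuclideanSpace ℝ (Fin n) → ℝ} (hF : ∀ x, F x = ⨆ i, f i x)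
    (h : EuclideanSpace ℝ (Fin n)) {y : EuclideanSpace ℝ (Fin n)} (hy : y ∈ U) :
    ∃ j, f j y = F y ∧
      Tendsto (fun t : ℝ => (F (y + t • h) - F y) / t) (𝓝[>] (0:ℝ))
        (𝓝 (fderiv ℝ (f j) y h)) ∧
      ∀ k, f k y = F y → fderiv ℝ (f k) y h ≤ fderiv ℝ (f j) y h := by
  haveI : Nonempty (Fin m) := ⟨⟨0, hm⟩⟩
  have hFle : ∀ z k, f k z ≤ F z := fun z k => by
    rw [hF z]
    exact le_ciSup (Set.Finite.bddAbove (Set.finite_range (fun k => f k z))) k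
  have hFex : ∀ z, ∃ k, f k z = F z := by
    intro z
    obtain ⟨k, hk⟩ := Finite.exists_max (fun k => f k z)
    refine ⟨k, le_antisymm (hFle z k) ?_⟩
    rw [hF z]
    exact ciSup_le hk
  set s : Finset (Fin m) := Finset.univ.filter (fun j => f j y = F y) with hs
  have hsne : s.Nonempty := by
    obtain ⟨k, hk⟩ := hFex y
    exact ⟨k, by simp [hs, hk]⟩
  obtain ⟨j, hjs, hjmax'⟩ := s.exists_max_image (fun k => fderiv ℝ (f k) y h) hsne
  have hjact : f j y = F y := (Finset.mem_filter.1 hjs).2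
  have hjmax : ∀ k, f k y = F y → fderiv ℝ (f k) y h ≤ fderiv ℝ (f j) y h := by
    intro k hk; exact hjmax' k (by simp [hs, hk])
  have hline : Tendsto (fun t : ℝ => y + t • h) (𝓝[>] (0:ℝ)) (𝓝 y) := by
    have : Continuous (fun t : ℝ => y + t • h) :=
      continuous_const.add (continuous_id.smul continuous_const)
    have h2 : Tendsto (fun t : ℝ => y + t • h) (𝓝[>] (0:ℝ)) (𝓝 (y + (0:ℝ) • h)) :=
      (this.tendsto 0).mono_left nhdsWithin_le_nhds
    simpa using h2
  refine ⟨j, hjact, ?_, hjmax⟩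
  rw [tendsto_order]
  constructor
  · -- lower bound
    intro a ha
    have hev := (aux_tendsto_quot h (hfd j y hy)).eventually (eventually_gt_nhds ha)
    filter_upwards [hev, self_mem_nhdsWithin] with t h1 (h2 : 0 < t)
    refine lt_of_lt_of_le h1 ?_
    rw [div_le_div_iff_of_pos_right h2, hjact]
    have := hFle (y + t • h) j
    linarith
  · -- upper bound
    intro b hb
    have ev1 : ∀ᶠ t in 𝓝[>] (0:ℝ), ∀ k, f k y ≠ F y →
        f k (y + t • h) < f j (y + t • h) := by
      rw [eventually_all]
      intro k
      by_cases hk : f k y = F y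
      · filter_upwards with t hk'; exact absurd hk hk'
      · have hlt : f k y < f j y := by
          rw [hjact]; exact lt_of_le_of_ne (hFle y k) hk
        have htd : Tendsto (fun t : ℝ => f j (y + t • h) - f k (y + t • h)) (𝓝[>] (0:ℝ))
            (𝓝 (f j y - f k y)) :=
          (((hfd j y hy).continuousAt.tendsto.comp hline).sub
            ((hfd k y hy).continuousAt.tendsto.comp hline))
        have := htd.eventually (eventually_gt_nhds (sub_pos.2 hlt))
        filter_upwards [this] with t ht _
        linarith
    have ev2 : ∀ᶠ t in 𝓝[>] (0:ℝ), ∀ k, f k y = F y →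
        (f k (y + t • h) - f k y) / t < b := by
      rw [eventually_all]
      intro k
      by_cases hk : f k y = F y
      · have hkb : fderiv ℝ (f k) y h < b := lt_of_le_of_lt (hjmax k hk) hb
        have := (aux_tendsto_quot h (hfd k y hy)).eventually (eventually_lt_nhds hkb)
        filter_upwards [this] with t ht _; exact ht
      · filter_upwards with t hk'; exact absurd hk' hk
    filter_upwards [ev1, ev2, self_mem_nhdsWithin] with t h1 h2 (h3 : 0 < t)
    obtain ⟨K, hK⟩ := hFex (y + t • h)
    have hKact : f K y = F y := by
      by_contra hKC
      have := h1 K hKC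
      have h4 := hFle (y + t • h) j
      rw [hK] at this
      linarith
    refine lt_of_le_of_lt ?_ (h2 K hKact)
    rw [div_le_div_iff_of_pos_right h3, ← hK]
    have := hFle y K
    linarith

/-- Lipschitz bound for differences of directional derivatives. -/
lemma lip_quot_bound {n : ℕ} {g : EuclideanSpace ℝ (Fin n) → (EuclideanSpace ℝ (Fin n) →L[ℝ] ℝ)}
    {K : ℝ≥0} {U : Set (EuclideanSpace ℝ (Fin n))} (hK : LipschitzOnWith K g U)
    {x z : EuclideanSpace ℝ (Fin n)} (h : EuclideanSpace ℝ (Fin n))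
    (hx : x ∈ U) (hz : z ∈ U) :
    |g z h - g x h| ≤ (K : ℝ) * ‖z - x‖ * ‖h‖ := by
  have h1 : |g z h - g x h| ≤ ‖g z - g x‖ * ‖h‖ := by
    have := (g z - g x).le_opNorm h
    simpa [Real.norm_eq_abs] using this
  have h2 : ‖g z - g x‖ ≤ (K : ℝ) * ‖z - x‖ := by
    have := (lipschitzOnWith_iff_dist_le_mul.1 hK) z hz x hx
    simpa [dist_eq_norm] using this
  calc |g z h - g x h| ≤ ‖g z - g x‖ * ‖h‖ := h1
    _ ≤ (K : ℝ) * ‖z - x‖ * ‖h‖ := mul_le_mul_of_nonneg_right h2 (norm_nonneg h)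

/-- Proposition 16: lower bound for generalized second-order derivatives of maximum
functions: `D̄²f(x,h²) ≥ D̲²fᵢ(x,h²)` for every index `i` in the argmax `M` of the
directional derivatives among the active indices. -/
theorem upperD2_max_ge_lowerD2 {n m : ℕ} (hm : 0 < m)
    (U : Set (EuclideanSpace ℝ (Fin n))) (hU : IsOpen U) (hUconv : Convex ℝ U)
    (f : Fin m → EuclideanSpace ℝ (Fin n) → ℝ)
    (hfd : ∀ i, ∀ x ∈ U, DifferentiableAt ℝ (f i) x)
    (hflip : ∀ i, ∃ K : ℝ≥0, LipschitzOnWith K (fun y => fderiv ℝ (f i) y) U)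
    (F : EuclideanSpace ℝ (Fin n) → ℝ)
    (hF : ∀ x, F x = ⨆ i, f i x)
    (x : EuclideanSpace ℝ (Fin n)) (hx : x ∈ U) (h : EuclideanSpace ℝ (Fin n))
    (i : Fin m) (hactive : f i x = F x)
    (hargmax : ∀ j, f j x = F x → fderiv ℝ (f j) x h ≤ fderiv ℝ (f i) x h) :
    lowerD2 (f i) x h ≤ upperD2 F x h := by
  unfold lowerD2 upperD2
  haveI : Nonempty (Fin m) := ⟨⟨0, hm⟩⟩
  have hFle : ∀ z k, f k z ≤ F z := fun z k => by
    rw [hF z]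
    exact le_ciSup (Set.Finite.bddAbove (Set.finite_range (fun k => f k z))) k
  choose K hK using hflip
  -- small increments stay in U
  obtain ⟨r, hr, hball⟩ := Metric.isOpen_iff.1 hU x hx
  set δ : ℝ := r / (‖h‖ + 1) with hδdef
  have hδ : 0 < δ := div_pos hr (by positivity)
  have hrδ : δ * (‖h‖ + 1) = r := div_mul_cancel₀ r (by positivity)
  have hmem : ∀ t : ℝ, |t| < δ → x + t • h ∈ U := by
    intro t ht
    apply hball
    rw [mem_ball, dist_eq_norm]
    have h1 : ‖x + t • h - x‖ = |t| * ‖h‖ := by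
      rw [add_sub_cancel_left, norm_smul, Real.norm_eq_abs]
    rw [h1]
    nlinarith [abs_nonneg t, norm_nonneg h]
  have ev_mem : ∀ᶠ t in 𝓝[>] (0:ℝ), 0 < t ∧ t < δ ∧ x + t • h ∈ U := by
    filter_upwards [Ioo_mem_nhdsGT_of_mem (show (0:ℝ) ∈ Ico (0:ℝ) δ from ⟨le_rfl, hδ⟩)]
      with t ht
    exact ⟨ht.1, ht.2, hmem t (by rw [abs_of_pos ht.1]; exact ht.2)⟩
  -- the directional derivative of F at x
  obtain ⟨j₀, hj₀act, hj₀t, hj₀max⟩ := maxQuot_tendsto hm hfd hF h hx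
  have cx : fderiv ℝ (f j₀) x h = fderiv ℝ (f i) x h :=
    le_antisymm (hargmax j₀ hj₀act) (hj₀max i hactive)
  have pFx : posDirDeriv F x h = fderiv ℝ (f i) x h := by
    rw [posDirDeriv]
    exact (cx ▸ hj₀t).limUnder_eq
  have pfi : ∀ y ∈ U, posDirDeriv (f i) y h = fderiv ℝ (f i) y h :=
    fun y hy => posDirDeriv_eq_fderiv h (hfd i y hy)
  -- abbreviations for the second-order quotients
  set Qi : ℝ → ℝ := fun t => (posDirDeriv (f i) (x + t • h) h - posDirDeriv (f i) x h) / t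
    with hQi
  set QF : ℝ → ℝ := fun t => (posDirDeriv F (x + t • h) h - posDirDeriv F x h) / t with hQF
  -- bound for Qi
  have hQi_bound : ∀ᶠ t in 𝓝[>] (0:ℝ), |Qi t| ≤ (K i : ℝ) * ‖h‖ * ‖h‖ := by
    filter_upwards [ev_mem] with t ⟨ht0, htδ, htU⟩
    have hb := lip_quot_bound (hK i) h hx htU
    have hnorm : ‖x + t • h - x‖ = t * ‖h‖ := by
      rw [add_sub_cancel_left, norm_smul, Real.norm_eq_abs, abs_of_pos ht0]
    rw [hnorm] at hb
    have heq : Qi t = (fderiv ℝ (f i) (x + t • h) h - fderiv ℝ (f i) x h) / t := by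
      simp only [hQi, pfi _ htU, pfi _ hx]
    rw [heq, abs_div, abs_of_pos ht0, div_le_iff₀ ht0]
    calc |fderiv ℝ (f i) (x + t • h) h - fderiv ℝ (f i) x h|
        ≤ (K i : ℝ) * (t * ‖h‖) * ‖h‖ := hb
      _ = (K i : ℝ) * ‖h‖ * ‖h‖ * t := by ring
  have hQi_lb : ∀ᶠ t in 𝓝[>] (0:ℝ), -((K i : ℝ) * ‖h‖ * ‖h‖) ≤ Qi t :=
    hQi_bound.mono fun t ht => neg_le_of_abs_le ht
  have hQi_ub : ∀ᶠ t in 𝓝[>] (0:ℝ), Qi t ≤ (K i : ℝ) * ‖h‖ * ‖h‖ :=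
    hQi_bound.mono fun t ht => le_of_abs_le ht
  -- upper bound for QF
  have ev_act : ∀ᶠ t in 𝓝[>] (0:ℝ), ∀ k, f k x ≠ F x →
      f k (x + t • h) < f i (x + t • h) := by
    rw [eventually_all]
    intro k
    by_cases hk : f k x = F x
    · filter_upwards with t hk'; exact absurd hk hk'
    · have hlt : f k x < f i x := by
        rw [hactive]; exact lt_of_le_of_ne (hFle x k) hk
      have hline : Tendsto (fun t : ℝ => x + t • h) (𝓝[>] (0:ℝ)) (𝓝 x) := by
        have hc : Continuous (fun t : ℝ => x + t • h) :=
          continuous_const.add (continuous_id.smul continuous_const)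
        have h2 : Tendsto (fun t : ℝ => x + t • h) (𝓝[>] (0:ℝ)) (𝓝 (x + (0:ℝ) • h)) :=
          (hc.tendsto 0).mono_left nhdsWithin_le_nhds
        simpa using h2
      have htd : Tendsto (fun t : ℝ => f i (x + t • h) - f k (x + t • h)) (𝓝[>] (0:ℝ))
          (𝓝 (f i x - f k x)) :=
        (((hfd i x hx).continuousAt.tendsto.comp hline).sub
          ((hfd k x hx).continuousAt.tendsto.comp hline))
      filter_upwards [htd.eventually (eventually_gt_nhds (sub_pos.2 hlt))] with t ht _
      linarith
  set B : ℝ := (∑ k, (K k : ℝ)) * ‖h‖ * ‖h‖ with hB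
  have hKB : ∀ k : Fin m, (K k : ℝ) ≤ ∑ k, (K k : ℝ) := fun k =>
    Finset.single_le_sum (fun k _ => (K k).coe_nonneg) (Finset.mem_univ k)
  have hQF_ub : ∀ᶠ t in 𝓝[>] (0:ℝ), QF t ≤ B := by
    filter_upwards [ev_mem, ev_act] with t ⟨ht0, htδ, htU⟩ hact
    obtain ⟨j, hjact, hjt, hjmax⟩ := maxQuot_tendsto hm hfd hF h htU
    have hpF : posDirDeriv F (x + t • h) h = fderiv ℝ (f j) (x + t • h) h := by
      rw [posDirDeriv]; exact hjt.limUnder_eq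
    have hjx : f j x = F x := by
      by_contra hC
      have h1 := hact j hC
      have h2 := hFle (x + t • h) i
      rw [hjact] at h1
      linarith
    have hb := lip_quot_bound (hK j) h hx htU
    have hnorm : ‖x + t • h - x‖ = t * ‖h‖ := by
      rw [add_sub_cancel_left, norm_smul, Real.norm_eq_abs, abs_of_pos ht0]
    rw [hnorm] at hb
    have hd1 : fderiv ℝ (f j) (x + t • h) h ≤ fderiv ℝ (f j) x h + (K j : ℝ) * (t * ‖h‖) * ‖h‖ := by
      have := le_of_abs_le hb
      linarith
    have hd2 : fderiv ℝ (f j) x h ≤ fderiv ℝ (f i) x h := hargmax j hjx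
    have heq : QF t = (fderiv ℝ (f j) (x + t • h) h - fderiv ℝ (f i) x h) / t := by
      simp only [hQF, hpF, pFx]
    rw [heq, div_le_iff₀ ht0, hB]
    have hKj := hKB j
    have hmul : (K j : ℝ) * (t * ‖h‖ * ‖h‖) ≤ (∑ k, (K k : ℝ)) * (t * ‖h‖ * ‖h‖) :=
      mul_le_mul_of_nonneg_right hKj (by positivity)
    nlinarith [hmul, hd1, hd2]
  -- the key frequently-inequality
  have hfreq : ∃ᶠ t in 𝓝[>] (0:ℝ), Qi t ≤ QF t := by
    have key : ∀ ε > (0:ℝ), ∃ t, (0 < t ∧ t < ε) ∧ x + t • h ∈ U ∧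
        fderiv ℝ (f i) (x + t • h) h ≤ posDirDeriv F (x + t • h) h := by
      intro ε hε
      set t₀ : ℝ := min ε δ / 2 with ht₀def
      have ht₀ : 0 < t₀ := by
        have := lt_min hε hδ; positivity
      have ht₀ε : t₀ < ε := by
        have h1 : min ε δ ≤ ε := min_le_left _ _
        have := lt_min hε hδ
        simp only [ht₀def]; linarith
      have ht₀δ : t₀ < δ := by
        have h1 : min ε δ ≤ δ := min_le_right _ _
        have := lt_min hε hδ
        simp only [ht₀def]; linarith
      clear_value t₀
      have hseg : ∀ t ∈ Icc (0:ℝ) t₀, x + t • h ∈ U := by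
        intro t ⟨h0, h1⟩
        exact hmem t (by rw [abs_of_nonneg h0]; linarith)
      set ψ : ℝ → ℝ := fun t => F (x + t • h) - f i (x + t • h) with hψdef
      have hψ0 : ψ 0 = 0 := by
        simp only [hψdef, zero_smul, add_zero]
        rw [hactive]; ring
      have hψnn : ∀ t, 0 ≤ ψ t := fun t => sub_nonneg.2 (hFle _ i)
      by_cases hc : f i (x + t₀ • h) = F (x + t₀ • h)
      · obtain ⟨j, hjact, hjt, hjmax⟩ :=
          maxQuot_tendsto hm hfd hF h (hseg t₀ ⟨le_of_lt ht₀, le_rfl⟩)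
        refine ⟨t₀, ⟨ht₀, ht₀ε⟩, hseg t₀ ⟨le_of_lt ht₀, le_rfl⟩, ?_⟩
        have hpF : posDirDeriv F (x + t₀ • h) h = fderiv ℝ (f j) (x + t₀ • h) h := by
          rw [posDirDeriv]; exact hjt.limUnder_eq
        rw [hpF]
        exact hjmax i hc
      · have hψt₀ : 0 < ψ t₀ :=
          lt_of_le_of_ne (hψnn t₀) (fun e => hc (by
            have := e.symm
            rw [hψdef] at this
            simp only [sub_eq_zero] at this
            exact this.symm))
        -- continuity of ψ on [0, t₀]
        have hcontF : ∀ y ∈ U, ContinuousAt F y := by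
          intro y hy
          have hFrw : F = fun z => Finset.univ.sup' Finset.univ_nonempty (fun k => f k z) := by
            funext z; rw [hF z, Finset.sup'_univ_eq_ciSup]
          rw [hFrw]
          exact ContinuousAt.finset_sup'_apply Finset.univ_nonempty
            (fun k _ => (hfd k y hy).continuousAt)
        have hline : Continuous (fun t : ℝ => x + t • h) :=
          continuous_const.add (continuous_id.smul continuous_const)
        have hcψ : ContinuousOn ψ (Icc 0 t₀) := by
          intro t ht
          have h1 : ContinuousAt (fun t : ℝ => F (x + t • h)) t :=
            ContinuousAt.comp (g := F) (hcontF _ (hseg t ht)) hline.continuousAt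
          have h2 : ContinuousAt (fun t : ℝ => f i (x + t • h)) t :=
            ContinuousAt.comp (g := f i) ((hfd i _ (hseg t ht)).continuousAt)
              hline.continuousAt
          exact (h1.sub h2).continuousWithinAt
        clear_value ψ
        set S : Set ℝ := {t | t ∈ Icc (0:ℝ) t₀ ∧ ψ t ≤ ψ t₀ / 2} with hSdef
        have hS0 : (0:ℝ) ∈ S := ⟨⟨le_rfl, le_of_lt ht₀⟩, by rw [hψ0]; linarith⟩
        have hSbdd : BddAbove S := ⟨t₀, fun u hu => hu.1.2⟩
        have hSclosed : IsClosed S := by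
          have hSeq : S = Icc (0:ℝ) t₀ ∩ ψ ⁻¹' (Iic (ψ t₀ / 2)) := rfl
          rw [hSeq]
          exact hcψ.preimage_isClosed_of_isClosed isClosed_Icc isClosed_Iic
        set s : ℝ := sSup S with hsdef
        clear_value s
        have hsmem : s ∈ S := by
          rw [hsdef]
          exact hSclosed.csSup_mem ⟨0, hS0⟩ hSbdd
        have hsIcc : s ∈ Icc (0:ℝ) t₀ := hsmem.1
        have hsψ : ψ s ≤ ψ t₀ / 2 := hsmem.2
        have hst₀ : s < t₀ := lt_of_le_of_ne hsIcc.2 (fun e => by rw [e] at hsψ; linarith)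
        have hgt2 : ∀ v, s < v → v ≤ t₀ → ψ t₀ / 2 < ψ v := by
          intro v hv1 hv2
          by_contra hle
          push_neg at hle
          have hvS : v ∈ S := ⟨⟨le_trans hsIcc.1 (le_of_lt hv1), hv2⟩, hle⟩
          have hvs : v ≤ s := by rw [hsdef]; exact le_csSup hSbdd hvS
          exact absurd hvs (not_le.2 hv1)
        have hspos : 0 < s := by
          rcases lt_or_eq_of_le hsIcc.1 with h' | h'
          · exact h'
          · exfalso
            -- ψ would be bounded below by ψ t₀ / 2 near 0⁺, contradicting ψ → 0
            have hten : Tendsto ψ (𝓝[>] (0:ℝ)) (𝓝 0) := by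
              have h1 : ContinuousWithinAt ψ (Icc 0 t₀) 0 := hcψ 0 ⟨le_rfl, le_of_lt ht₀⟩
              have h2 : Tendsto ψ (𝓝[Icc 0 t₀] (0:ℝ)) (𝓝 (ψ 0)) := h1
              rw [hψ0] at h2
              have h3 : Tendsto ψ (𝓝[Ioo 0 t₀] (0:ℝ)) (𝓝 0) :=
                h2.mono_left (nhdsWithin_mono _ Ioo_subset_Icc_self)
              rwa [nhdsWithin_Ioo_eq_nhdsGT ht₀] at h3
            have hev : ∀ᶠ u in 𝓝[>] (0:ℝ), ψ t₀ / 2 ≤ ψ u := by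
              filter_upwards [Ioo_mem_nhdsGT_of_mem
                (show (0:ℝ) ∈ Ico (0:ℝ) t₀ from ⟨le_rfl, ht₀⟩)] with u hu
              exact le_of_lt (hgt2 u (h' ▸ hu.1) (le_of_lt hu.2))
            have := ge_of_tendsto hten hev
            linarith
        refine ⟨s, ⟨hspos, lt_trans hst₀ ht₀ε⟩, hseg s hsIcc, ?_⟩
        obtain ⟨j, hjact, hjt, hjmax⟩ := maxQuot_tendsto hm hfd hF h (hseg s hsIcc)
        have hpF : posDirDeriv F (x + s • h) h = fderiv ℝ (f j) (x + s • h) h := by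
          rw [posDirDeriv]; exact hjt.limUnder_eq
        rw [hpF]
        -- compare the first-order difference quotients at x + s h
        have hquot : ∀ᶠ u in 𝓝[>] (0:ℝ),
            (f i ((x + s • h) + u • h) - f i (x + s • h)) / u ≤
            (F ((x + s • h) + u • h) - F (x + s • h)) / u := by
          have hmemIoc : Ioc (0:ℝ) (t₀ - s) ∈ 𝓝[>] (0:ℝ) :=
            mem_of_superset (Ioo_mem_nhdsGT_of_mem
              (show (0:ℝ) ∈ Ico (0:ℝ) (t₀ - s) from ⟨le_rfl, sub_pos.2 hst₀⟩))
              Ioo_subset_Ioc_self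
          filter_upwards [hmemIoc] with u hu
          have hrw : x + (s + u) • h = (x + s • h) + u • h := by
            rw [add_smul, add_assoc]
          have hkey : ψ s ≤ ψ (s + u) := by
            have := hgt2 (s + u) (by linarith [hu.1]) (by linarith [hu.2])
            linarith
          rw [hψdef] at hkey
          simp only [hrw] at hkey
          rw [div_le_div_iff_of_pos_right hu.1]
          linarith
        exact le_of_tendsto_of_tendsto (aux_tendsto_quot h (hfd i _ (hseg s hsIcc))) hjt hquot
    -- turn `key` into a frequently statement
    rw [Filter.frequently_iff]
    intro V hV
    rw [mem_nhdsGT_iff_exists_Ioo_subset] at hV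
    obtain ⟨u, hu, hsub⟩ := hV
    obtain ⟨t, ⟨ht0, htu⟩, htU, hineq⟩ := key (min u δ) (lt_min hu hδ)
    refine ⟨t, hsub ⟨ht0, lt_of_lt_of_le htu (min_le_left _ _)⟩, ?_⟩
    have htδ : t < δ := lt_of_lt_of_le htu (min_le_right _ _)
    show Qi t ≤ QF t
    have hQit : Qi t = (fderiv ℝ (f i) (x + t • h) h - fderiv ℝ (f i) x h) / t := by
      simp only [hQi, pfi _ htU, pfi _ hx]
    have hQFt : QF t = (posDirDeriv F (x + t • h) h - fderiv ℝ (f i) x h) / t := by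
      simp only [hQF, pFx]
    rw [hQit, hQFt, div_le_div_iff_of_pos_right ht0]
    linarith
  -- conclude
  have hBQi : IsBoundedUnder (· ≥ ·) (𝓝[>] (0:ℝ)) Qi :=
    ⟨-((K i : ℝ) * ‖h‖ * ‖h‖), by simpa [eventually_map] using hQi_lb⟩
  have hBQF : IsBoundedUnder (· ≤ ·) (𝓝[>] (0:ℝ)) QF :=
    ⟨B, by simpa [eventually_map] using hQF_ub⟩
  refine le_of_forall_pos_le_add ?_
  intro ε hε
  have h1 : liminf Qi (𝓝[>] (0:ℝ)) - ε < liminf Qi (𝓝[>] (0:ℝ)) := by linarith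
  have h2 := eventually_lt_of_lt_liminf h1 hBQi
  have h3 : ∃ᶠ t in 𝓝[>] (0:ℝ), liminf Qi (𝓝[>] (0:ℝ)) - ε ≤ QF t :=
    (hfreq.and_eventually h2).mono fun t ⟨ha, hb⟩ => le_trans (le_of_lt hb) ha
  have h4 := le_limsup_of_frequently_le h3 hBQF
  linarith
end

section
/- Let U ⊆ ℝⁿ be open, m ∈ ℕ, g₁, …, g_m : U → ℝ continuous maps that are C^{1,1}-submersions on their zero sets, and let Ω = {x ∈ U | g₁(x) ≤ 0, …, g_m(x) ≤ 0} be closed in ℝⁿ and connected. If int C(x) ≠ ∅ for every boundary point x of Ω, then Ω is regular closed, i.e. Ω equals the closure of its interior, and the interior of Ω is connected. -/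
open Filter Metric Set
open scoped Topology RealInnerProductSpace NNReal

/-- `g` is a `C^{1,1}`-submersion on its zero set (relative to the open set `U`). -/
def C11SubmersionOnZeroSet {n : ℕ} (U : Set (EuclideanSpace ℝ (Fin n)))
    (g : EuclideanSpace ℝ (Fin n) → ℝ) : Prop :=
  ∀ x ∈ U, g x = 0 →
    (∃ V, IsOpen V ∧ x ∈ V ∧ V ⊆ U ∧ (∀ y ∈ V, DifferentiableAt ℝ g y) ∧
      ∃ K : ℝ≥0, LipschitzOnWith K (fun y => fderiv ℝ g y) V) ∧
    fderiv ℝ g x ≠ 0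

lemma clm_neg_of_interior {E : Type*} [NormedAddCommGroup E] [NormedSpace ℝ E]
    (L : E →L[ℝ] ℝ) (hL : L ≠ 0) {S : Set E} (hS : S ⊆ {h | L h ≤ 0})
    {h : E} (hh : h ∈ interior S) : L h < 0 := by
  have hle : L h ≤ 0 := hS (interior_subset hh)
  rcases hle.lt_or_eq with h1 | h1
  · exact h1
  exfalso
  obtain ⟨w, hw⟩ : ∃ w, L w ≠ 0 := by
    by_contra hc
    push_neg at hc
    exact hL (ContinuousLinearMap.ext fun a => by simpa using hc a)
  set v := (L w)⁻¹ • w with hv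
  have hLv : L v = 1 := by
    simp [hv, map_smul, smul_eq_mul, inv_mul_cancel₀ hw]
  obtain ⟨δ, hδ, hball⟩ := Metric.mem_nhds_iff.1 (mem_interior_iff_mem_nhds.1 hh)
  set τ := δ / (2 * (‖v‖ + 1)) with hτ
  have hτpos : 0 < τ := by positivity
  have hmem : h + τ • v ∈ ball h δ := by
    rw [mem_ball_iff_norm, add_sub_cancel_left, norm_smul, Real.norm_eq_abs,
      abs_of_pos hτpos]
    have hvn : 0 ≤ ‖v‖ := norm_nonneg v
    rw [hτ]
    rw [div_mul_eq_mul_div]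
    rw [div_lt_iff₀ (by positivity)]
    nlinarith
  have h2 : L (h + τ • v) ≤ 0 := hS (hball hmem)
  rw [map_add, map_smul, hLv, smul_eq_mul, mul_one, ← h1] at h2
  linarith

lemma key_lemma {n m : ℕ}
    (U : Set (EuclideanSpace ℝ (Fin n))) (hU : IsOpen U)
    (g : Fin m → EuclideanSpace ℝ (Fin n) → ℝ)
    (hgc : ∀ i, ContinuousOn (g i) U)
    (hgs : ∀ i, C11SubmersionOnZeroSet U (g i))
    (Ω : Set (EuclideanSpace ℝ (Fin n)))
    (hΩ : Ω = {x | x ∈ U ∧ ∀ i, g i x ≤ 0}) (hcl : IsClosed Ω)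
    {x : EuclideanSpace ℝ (Fin n)} (hxf : x ∈ frontier Ω)
    {h : EuclideanSpace ℝ (Fin n)}
    (hh : h ∈ interior {h | ∀ j, g j x = 0 → fderiv ℝ (g j) x h ≤ 0}) :
    ∃ τ ε : ℝ, 0 < τ ∧ 0 < ε ∧
      (∀ y ∈ ball x ε ∩ Ω, ∀ t ∈ Set.Ioc (0:ℝ) τ,
        y + t • h ∈ {z | z ∈ U ∧ ∀ i, g i z < 0}) ∧
      ball (x + τ • h) ε ⊆ {z | z ∈ U ∧ ∀ i, g i z < 0} := by
  classical
  have hxΩ : x ∈ Ω := hcl.frontier_subset hxf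
  have hxU : x ∈ U := by rw [hΩ] at hxΩ; exact hxΩ.1
  have hxg : ∀ i, g i x ≤ 0 := by rw [hΩ] at hxΩ; exact hxΩ.2
  -- active set
  set act : Finset (Fin m) := Finset.univ.filter (fun j => g j x = 0) with hact
  have hact_mem : ∀ j, j ∈ act ↔ g j x = 0 := by
    intro j; simp [hact]
  have hΩs_sub : {z | z ∈ U ∧ ∀ i, g i z < 0} ⊆ Ω := by
    intro z hz; rw [hΩ]; exact ⟨hz.1, fun i => (hz.2 i).le⟩
  have hΩs_open : IsOpen {z | z ∈ U ∧ ∀ i, g i z < 0} := by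
    have : {z | z ∈ U ∧ ∀ i, g i z < 0} = U ∩ ⋂ i, (U ∩ g i ⁻¹' Iio 0) := by
      ext z; simp [Set.mem_iInter, forall_and]; tauto
    rw [this]
    exact hU.inter (isOpen_iInter_of_finite fun i =>
      ((hgc i).isOpen_inter_preimage hU isOpen_Iio))
  have hact_ne : act.Nonempty := by
    by_contra hne
    rw [Finset.not_nonempty_iff_eq_empty] at hne
    have hlt : ∀ i, g i x < 0 := by
      intro i
      rcases (hxg i).lt_or_eq with h' | h'
      · exact h'
      · exact absurd ((hact_mem i).2 h')
          (by simp [hne])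
    exact hxf.2 (mem_interior_iff_mem_nhds.2 (Filter.mem_of_superset
      (hΩs_open.mem_nhds ⟨hxU, hlt⟩) hΩs_sub))
  -- data for active constraints
  have hdata : ∀ j ∈ act, ∃ V, IsOpen V ∧ x ∈ V ∧ V ⊆ U ∧
      (∀ y ∈ V, DifferentiableAt ℝ (g j) y) ∧
      ∃ K : ℝ≥0, LipschitzOnWith K (fun y => fderiv ℝ (g j) y) V := by
    intro j hj
    exact ((hgs j) x hxU ((hact_mem j).1 hj)).1
  choose! V hVopen hVx hVU hVdiff K hVlip using hdata
  -- the constant c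
  set c : ℝ := act.inf' hact_ne (fun j => -(fderiv ℝ (g j) x h)) with hc
  have hcpos : 0 < c := by
    rw [Finset.lt_inf'_iff]
    intro j hj
    have hLne := ((hgs j) x hxU ((hact_mem j).1 hj)).2
    have hneg : fderiv ℝ (g j) x h < 0 := by
      refine clm_neg_of_interior _ hLne ?_ hh
      intro h' hh'
      exact hh' j ((hact_mem j).1 hj)
    linarith
  have hc_le : ∀ j ∈ act, fderiv ℝ (g j) x h ≤ -c := by
    intro j hj
    have := Finset.inf'_le (f := fun j => -(fderiv ℝ (g j) x h)) (b := j) hj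
    linarith [this]
  set Km : ℝ := act.sup' hact_ne (fun j => (K j : ℝ)) with hKm
  have hKm_nonneg : 0 ≤ Km := by
    obtain ⟨j0, hj0⟩ := hact_ne
    exact le_trans (K j0).2 (Finset.le_sup' (fun j => (K j : ℝ)) hj0)
  -- neighborhood where everything is controlled
  have hev : ∀ j : Fin m, ∀ᶠ y in 𝓝 x, ((j ∈ act → y ∈ V j) ∧ (j ∉ act → g j y < 0)) := by
    intro j
    by_cases hj : j ∈ act
    · filter_upwards [(hVopen j hj).mem_nhds (hVx j hj)] with y hy
      exact ⟨fun _ => hy, fun hc' => absurd hj hc'⟩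
    · have hlt : g j x < 0 :=
        lt_of_le_of_ne (hxg j) (fun e => hj ((hact_mem j).2 e))
      have hcont : ContinuousAt (g j) x := (hgc j).continuousAt (hU.mem_nhds hxU)
      filter_upwards [hcont.preimage_mem_nhds (Iio_mem_nhds hlt)] with y hy
      exact ⟨fun h' => absurd h' hj, fun _ => hy⟩
  have hballU : ∀ᶠ y in 𝓝 x,
      (y ∈ U ∧ ∀ j, ((j ∈ act → y ∈ V j) ∧ (j ∉ act → g j y < 0))) :=
    (hU.eventually_mem hxU).and (eventually_all.2 hev)
  obtain ⟨ε₀, hε₀pos, hε₀⟩ := Metric.eventually_nhds_iff_ball.1 hballU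
  set ε₁ : ℝ := min ε₀ (c / (2 * (Km + 1) * (‖h‖ + 1))) with hε₁
  have hε₁pos : 0 < ε₁ := lt_min hε₀pos (by positivity)
  have hε₁ball : ∀ y ∈ ball x ε₁,
      y ∈ U ∧ ∀ j, ((j ∈ act → y ∈ V j) ∧ (j ∉ act → g j y < 0)) :=
    fun y hy => hε₀ y (ball_subset_ball (min_le_left _ _) hy)
  -- derivative bound on the ball
  have hderiv : ∀ j ∈ act, ∀ z ∈ ball x ε₁, fderiv ℝ (g j) z h ≤ -c/2 := by
    intro j hj z hz
    have hzV : z ∈ V j := ((hε₁ball z hz).2 j).1 hj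
    have hxV : x ∈ V j := hVx j hj
    have hd := (hVlip j hj).dist_le_mul z hzV x hxV
    rw [dist_eq_norm] at hd
    have hKj : (K j : ℝ) ≤ Km := Finset.le_sup' (fun j => (K j : ℝ)) hj
    have hdz : dist z x < ε₁ := mem_ball.1 hz
    have h1 : fderiv ℝ (g j) z h - fderiv ℝ (g j) x h
        ≤ ‖fderiv ℝ (g j) z - fderiv ℝ (g j) x‖ * ‖h‖ := by
      have hop := (fderiv ℝ (g j) z - fderiv ℝ (g j) x).le_opNorm h
      have h2 : fderiv ℝ (g j) z h - fderiv ℝ (g j) x h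
          = (fderiv ℝ (g j) z - fderiv ℝ (g j) x) h := by simp
      rw [h2]
      exact le_trans (le_abs_self _) (by simpa [Real.norm_eq_abs] using hop)
    have hε₁le : ε₁ ≤ c / (2 * (Km + 1) * (‖h‖ + 1)) := min_le_right _ _
    have hLh := hc_le j hj
    have hKnn : (0:ℝ) ≤ (K j : ℝ) := (K j).2
    have hnn : (0:ℝ) ≤ ‖h‖ := norm_nonneg h
    have hdnn : (0:ℝ) ≤ dist z x := dist_nonneg
    have hkey : Km * ε₁ * ‖h‖ ≤ c/2 := by
      have h3 : ε₁ * (2 * (Km + 1) * (‖h‖ + 1)) ≤ c := by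
        rw [← le_div_iff₀ (by positivity)]
        exact hε₁le
      nlinarith [hε₁pos.le, hKm_nonneg]
    have e1 : ‖fderiv ℝ (g j) z - fderiv ℝ (g j) x‖ * ‖h‖ ≤ Km * ε₁ * ‖h‖ := by
      have : ‖fderiv ℝ (g j) z - fderiv ℝ (g j) x‖ ≤ Km * ε₁ := by
        nlinarith
      nlinarith [norm_nonneg (fderiv ℝ (g j) z - fderiv ℝ (g j) x)]
    linarith
  have hVball : ∀ j ∈ act, ∀ z ∈ ball x ε₁, z ∈ V j :=
    fun j hj z hz => ((hε₁ball z hz).2 j).1 hj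
  -- decrease along the direction h
  have dec : ∀ (y : EuclideanSpace ℝ (Fin n)) (t : ℝ), 0 ≤ t →
      (∀ s ∈ Icc (0:ℝ) t, y + s • h ∈ ball x ε₁) →
      ∀ j ∈ act, g j (y + t • h) ≤ g j y - c/2 * t := by
    intro y t ht hseg j hj
    set F : ℝ → ℝ := fun s => g j (y + s • h) + c/2 * s with hF
    have hFd : ∀ s ∈ Icc (0:ℝ) t,
        HasDerivAt F (fderiv ℝ (g j) (y + s • h) h + c/2) s := by
      intro s hs
      have hz : y + s • h ∈ V j := hVball j hj _ (hseg s hs)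
      have hγ : HasDerivAt (fun s : ℝ => y + s • h) h s := by
        simpa using ((hasDerivAt_id s).smul_const h).const_add y
      have hg' : HasDerivAt (fun s : ℝ => g j (y + s • h))
          (fderiv ℝ (g j) (y + s • h) h) s :=
        HasFDerivAt.comp_hasDerivAt s (hVdiff j hj _ hz).hasFDerivAt hγ
      have hsum := hg'.add ((hasDerivAt_id s).const_mul (c/2))
      rw [mul_one] at hsum
      exact hsum
    have hmono : AntitoneOn F (Icc 0 t) := by
      refine antitoneOn_of_deriv_nonpos (convex_Icc 0 t) ?_ ?_ ?_
      · exact fun s hs => (hFd s hs).continuousAt.continuousWithinAt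
      · intro s hs
        rw [interior_Icc] at hs
        exact (hFd s (Ioo_subset_Icc_self hs)).differentiableAt.differentiableWithinAt
      · intro s hs
        rw [interior_Icc] at hs
        rw [(hFd s (Ioo_subset_Icc_self hs)).deriv]
        have := hderiv j hj (y + s • h) (hseg s (Ioo_subset_Icc_self hs))
        linarith
    have hmq := hmono (left_mem_Icc.2 ht) (right_mem_Icc.2 ht) ht
    simp only [hF, zero_smul, add_zero, mul_zero] at hmq
    linarith
  -- choose τ and ε
  set τ : ℝ := ε₁ / (4 * (‖h‖ + 1)) with hτdef
  have hτpos : 0 < τ := by positivity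
  have hτh : τ * ‖h‖ ≤ ε₁ / 4 := by
    rw [hτdef, div_mul_eq_mul_div, div_le_div_iff₀ (by positivity) (by norm_num)]
    nlinarith [norm_nonneg h, hε₁pos.le]
  have hseg_mem : ∀ y ∈ ball x (ε₁/4), ∀ s ∈ Icc (0:ℝ) τ, y + s • h ∈ ball x ε₁ := by
    intro y hy s hs
    rw [mem_ball_iff_norm] at hy ⊢
    have hrw : y + s • h - x = (y - x) + s • h := by abel
    rw [hrw]
    have h1 : ‖(y - x) + s • h‖ ≤ ‖y - x‖ + ‖s • h‖ := norm_add_le _ _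
    have h2 : ‖s • h‖ = s * ‖h‖ := by
      rw [norm_smul, Real.norm_eq_abs, abs_of_nonneg hs.1]
    have h3 : s * ‖h‖ ≤ τ * ‖h‖ :=
      mul_le_mul_of_nonneg_right hs.2 (norm_nonneg h)
    linarith
  have claimI : ∀ y ∈ ball x (ε₁/4) ∩ Ω, ∀ t ∈ Set.Ioc (0:ℝ) τ,
      y + t • h ∈ {z | z ∈ U ∧ ∀ i, g i z < 0} := by
    intro y hy t ht
    have hyb := hy.1
    have hygle : ∀ i, g i y ≤ 0 := by
      have := hy.2; rw [hΩ] at this; exact this.2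
    have hsegy : ∀ s ∈ Icc (0:ℝ) t, y + s • h ∈ ball x ε₁ :=
      fun s hs => hseg_mem y hyb s ⟨hs.1, hs.2.trans ht.2⟩
    have hmem : y + t • h ∈ ball x ε₁ := hsegy t ⟨ht.1.le, le_refl t⟩
    refine ⟨(hε₁ball _ hmem).1, fun i => ?_⟩
    by_cases hi : i ∈ act
    · have hd1 := dec y t ht.1.le hsegy i hi
      have hd2 := hygle i
      nlinarith [ht.1]
    · exact ((hε₁ball _ hmem).2 i).2 hi
  have hxτ : x + τ • h ∈ {z | z ∈ U ∧ ∀ i, g i z < 0} :=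
    claimI x ⟨mem_ball_self (by linarith), hxΩ⟩ τ ⟨hτpos, le_refl τ⟩
  obtain ⟨ε₂, hε₂pos, hε₂⟩ := Metric.isOpen_iff.1 hΩs_open _ hxτ
  refine ⟨τ, min (ε₁/4) ε₂, hτpos, lt_min (by linarith) hε₂pos, ?_, ?_⟩
  · intro y hy t ht
    exact claimI y ⟨ball_subset_ball (min_le_left _ _) hy.1, hy.2⟩ t ht
  · exact fun z hz => hε₂ (ball_subset_ball (min_le_right _ _) hz)


/-- Lemma 17: if the interior of the cone `C(x)` is nonempty at every boundary point of
the connected closed sublevel set `Ω`, then `Ω` is regular closed and its interior is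
connected. -/
theorem regular_closed_and_interior_connected {n m : ℕ} (hm : 0 < m)
    (U : Set (EuclideanSpace ℝ (Fin n))) (hU : IsOpen U)
    (g : Fin m → EuclideanSpace ℝ (Fin n) → ℝ)
    (hgc : ∀ i, ContinuousOn (g i) U)
    (hgs : ∀ i, C11SubmersionOnZeroSet U (g i))
    (Ω : Set (EuclideanSpace ℝ (Fin n)))
    (hΩ : Ω = {x | x ∈ U ∧ ∀ i, g i x ≤ 0})
    (hcl : IsClosed Ω) (hconn : IsPreconnected Ω)
    (hcone : ∀ x ∈ frontier Ω,
      (interior {h : EuclideanSpace ℝ (Fin n) |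
          ∀ j, g j x = 0 → fderiv ℝ (g j) x h ≤ 0}).Nonempty) :
    Ω = closure (interior Ω) ∧ IsPreconnected (interior Ω) := by
  classical
  set Ωs : Set (EuclideanSpace ℝ (Fin n)) := {z | z ∈ U ∧ ∀ i, g i z < 0} with hΩsdef
  have hΩs_sub : Ωs ⊆ Ω := by
    intro z hz; rw [hΩ]; exact ⟨hz.1, fun i => (hz.2 i).le⟩
  have hΩs_open : IsOpen Ωs := by
    have hrw : Ωs = U ∩ ⋂ i, (U ∩ g i ⁻¹' Iio 0) := by
      ext z; simp [hΩsdef, Set.mem_iInter, forall_and]; tauto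
    rw [hrw]
    exact hU.inter (isOpen_iInter_of_finite fun i =>
      ((hgc i).isOpen_inter_preimage hU isOpen_Iio))
  have hΩs_int : Ωs ⊆ interior Ω := interior_maximal hΩs_sub hΩs_open
  -- every frontier point is a limit of interior points
  have hfr_cl : ∀ x ∈ frontier Ω, x ∈ closure (interior Ω) := by
    intro x hxf
    obtain ⟨h, hh⟩ := hcone x hxf
    obtain ⟨τ, ε, hτ, hε, hI, -⟩ :=
      key_lemma U hU g hgc hgs Ω hΩ hcl hxf hh
    have hten : Filter.Tendsto (fun t : ℝ => x + t • h) (𝓝[>] (0:ℝ)) (𝓝 x) := by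
      have hc : Continuous (fun t : ℝ => x + t • h) :=
        continuous_const.add (continuous_id.smul continuous_const)
      have h0 : Filter.Tendsto (fun t : ℝ => x + t • h) (𝓝 0) (𝓝 (x + (0:ℝ) • h)) :=
        hc.tendsto 0
      have := h0.mono_left (nhdsWithin_le_nhds (s := Set.Ioi (0:ℝ)))
      simpa using this
    refine closure_mono hΩs_int (mem_closure_of_tendsto hten ?_)
    filter_upwards [Ioc_mem_nhdsGT_of_mem ⟨le_refl (0:ℝ), hτ⟩] with t ht
    exact hI x ⟨mem_ball_self hε, hcl.frontier_subset hxf⟩ t ht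
  have h1 : Ω = closure (interior Ω) := by
    apply Subset.antisymm
    · intro x hx
      by_cases hxi : x ∈ interior Ω
      · exact subset_closure hxi
      · exact hfr_cl x ⟨subset_closure hx, hxi⟩
    · calc closure (interior Ω) ⊆ closure Ω := closure_mono interior_subset
        _ = Ω := hcl.closure_eq
  refine ⟨h1, ?_⟩
  -- connectivity of the interior
  intro u v hu hv hcov ⟨a, haΩ, hau⟩ ⟨b, hbΩ, hbv⟩
  set A : Set (EuclideanSpace ℝ (Fin n)) := interior Ω ∩ u with hA
  set B : Set (EuclideanSpace ℝ (Fin n)) := interior Ω ∩ v with hB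
  have hcover : Ω ⊆ closure A ∪ closure B := by
    intro z hz
    have hz' : z ∈ closure (interior Ω) := h1 ▸ hz
    have : interior Ω ⊆ A ∪ B := fun w hw => by
      rcases hcov hw with h' | h'
      · exact Or.inl ⟨hw, h'⟩
      · exact Or.inr ⟨hw, h'⟩
    have := closure_mono this hz'
    rwa [closure_union] at this
  obtain ⟨x, hxΩ, hxA, hxB⟩ :=
    isPreconnected_closed_iff.1 hconn (closure A) (closure B)
      isClosed_closure isClosed_closure hcover
      ⟨a, interior_subset haΩ, subset_closure ⟨haΩ, hau⟩⟩
      ⟨b, interior_subset hbΩ, subset_closure ⟨hbΩ, hbv⟩⟩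
  by_cases hxi : x ∈ interior Ω
  · rcases hcov hxi with hxu | hxv
    · obtain ⟨y, ⟨hy1, hy2⟩, hy3, hy4⟩ :=
        _root_.mem_closure_iff.1 hxB (u ∩ interior Ω) (hu.inter isOpen_interior)
          ⟨hxu, hxi⟩
      exact ⟨y, hy2, hy1, hy4⟩
    · obtain ⟨y, ⟨hy1, hy2⟩, hy3, hy4⟩ :=
        _root_.mem_closure_iff.1 hxA (v ∩ interior Ω) (hv.inter isOpen_interior)
          ⟨hxv, hxi⟩
      exact ⟨y, hy2, hy4, hy1⟩
  · -- x is a frontier point: use the key lemma to build a connected bridge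
    have hxf : x ∈ frontier Ω := ⟨subset_closure hxΩ, hxi⟩
    obtain ⟨h, hh⟩ := hcone x hxf
    obtain ⟨τ, ε, hτ, hε, hI, hII⟩ :=
      key_lemma U hU g hgc hgs Ω hΩ hcl hxf hh
    set Bb : Set (EuclideanSpace ℝ (Fin n)) := ball (x + τ • h) ε with hBb
    set S : Set (EuclideanSpace ℝ (Fin n)) := ball x ε ∩ interior Ω with hS
    set seg : EuclideanSpace ℝ (Fin n) → Set (EuclideanSpace ℝ (Fin n)) :=
      fun y => (fun t : ℝ => y + t • h) '' Icc 0 τ with hsegdef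
    set KK : Set (EuclideanSpace ℝ (Fin n)) := ⋃ y ∈ S, (seg y ∪ Bb) with hKK
    have hsegC : ∀ y, IsPreconnected (seg y) := by
      intro y
      exact (isPreconnected_Icc).image _
        (continuous_const.add (continuous_id.smul continuous_const)).continuousOn
    have hmemτ : ∀ y, y + τ • h ∈ seg y :=
      fun y => ⟨τ, ⟨hτ.le, le_refl τ⟩, rfl⟩
    have hmem0 : ∀ y, y ∈ seg y :=
      fun y => ⟨0, ⟨le_refl 0, hτ.le⟩, by simp⟩
    have hKpre : IsPreconnected KK := by
      rw [hKK, ← sUnion_image]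
      refine isPreconnected_sUnion (x + τ • h) _ ?_ ?_
      · rintro s ⟨y, hy, rfl⟩
        exact Or.inr (mem_ball_self hε)
      · rintro s ⟨y, hy, rfl⟩
        refine IsPreconnected.union (y + τ • h) (hmemτ y) ?_ (hsegC y)
          ((convex_ball _ _).isPreconnected)
        rw [hBb, mem_ball_iff_norm]
        have : y + τ • h - (x + τ • h) = y - x := by abel
        rw [this, ← mem_ball_iff_norm]
        exact hy.1
    have hKsub : KK ⊆ interior Ω := by
      rw [hKK]
      refine Set.iUnion₂_subset fun y hy => Set.union_subset ?_ ?_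
      · rintro z ⟨t, ht, rfl⟩
        rcases ht.1.lt_or_eq with h' | h'
        · exact hΩs_int (hI y ⟨hy.1, interior_subset hy.2⟩ t ⟨h', ht.2⟩)
        · rw [← h']; simpa using hy.2
      · exact fun z hz => hΩs_int (hII hz)
    -- find points of A and B inside the ball around x
    obtain ⟨a', ha1, ha3, ha4⟩ :=
      _root_.mem_closure_iff.1 hxA (ball x ε) isOpen_ball (mem_ball_self hε)
    obtain ⟨b', hb1, hb3, hb4⟩ :=
      _root_.mem_closure_iff.1 hxB (ball x ε) isOpen_ball (mem_ball_self hε)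
    have ha'K : a' ∈ KK := by
      rw [hKK]
      exact Set.mem_biUnion ⟨ha1, ha3⟩ (Or.inl (hmem0 a'))
    have hb'K : b' ∈ KK := by
      rw [hKK]
      exact Set.mem_biUnion ⟨hb1, hb3⟩ (Or.inl (hmem0 b'))
    obtain ⟨z, hzK, hzu, hzv⟩ :=
      hKpre u v hu hv (fun w hw => hcov (hKsub hw))
        ⟨a', ha'K, ha4⟩ ⟨b', hb'K, hb4⟩
    exact ⟨z, hKsub hzK, hzu, hzv⟩
end

section
/- Let U ⊆ ℝⁿ be open, g : U → ℝ of class C¹, Ω = {x ∈ U | g(x) ≤ 0}, and assume g(0) = 0 and g'(0)p < 0 for some p ∈ ℝⁿ. Then there exists ε > 0 such that for every q = t·p with t ∈ (0, ε]: the line segment conv{0, q} with the point 0 removed is contained in the interior of Ω, and there exists an open neighborhood V ⊆ ℝⁿ of the segment conv{0, q} such that V ∩ int Ω is star-shaped with respect to q (i.e. for every y ∈ V ∩ int Ω the segment conv{y, q} is contained in V ∩ int Ω). -/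
open Filter Metric Set
open scoped Topology RealInnerProductSpace NNReal

private lemma dec_aux {n : ℕ} {U : Set (EuclideanSpace ℝ (Fin n))} (hU : IsOpen U)
    {g : EuclideanSpace ℝ (Fin n) → ℝ} (hg : DifferentiableOn ℝ g U)
    (y w : EuclideanSpace ℝ (Fin n))
    (hmem : ∀ μ ∈ Icc (0:ℝ) 1, y + μ • w ∈ U)
    (hder : ∀ μ ∈ Icc (0:ℝ) 1, fderiv ℝ g (y + μ • w) w < 0) :
    StrictAntiOn (fun μ : ℝ => g (y + μ • w)) (Icc 0 1) := by
  have hdiff : ∀ μ ∈ Icc (0:ℝ) 1, HasDerivAt (fun μ : ℝ => g (y + μ • w))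
      (fderiv ℝ g (y + μ • w) w) μ := by
    intro μ hμ
    have hgd : DifferentiableAt ℝ g (y + μ • w) :=
      (hg (y + μ • w) (hmem μ hμ)).differentiableAt (hU.mem_nhds (hmem μ hμ))
    have hz : HasDerivAt (fun μ : ℝ => y + μ • w) w μ := by
      simpa using ((hasDerivAt_id μ).smul_const w).const_add y
    exact hgd.hasFDerivAt.comp_hasDerivAt μ hz
  apply strictAntiOn_of_deriv_neg (convex_Icc 0 1)
  · exact fun μ hμ => (hdiff μ hμ).continuousAt.continuousWithinAt
  · intro μ hμ
    rw [interior_Icc] at hμ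
    rw [(hdiff μ (Ioo_subset_Icc_self hμ)).deriv]
    exact hder μ (Ioo_subset_Icc_self hμ)

set_option maxHeartbeats 1000000 in
/-- Lemma 18 -/
theorem starShaped_neighborhood_of_descent_direction {n : ℕ}
    (U : Set (EuclideanSpace ℝ (Fin n))) (hU : IsOpen U)
    (g : EuclideanSpace ℝ (Fin n) → ℝ) (hg : ContDiffOn ℝ 1 g U)
    (Ω : Set (EuclideanSpace ℝ (Fin n)))
    (hΩ : Ω = {x | x ∈ U ∧ g x ≤ 0})
    (h0U : (0 : EuclideanSpace ℝ (Fin n)) ∈ U) (hg0 : g 0 = 0)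
    (p : EuclideanSpace ℝ (Fin n)) (hp : fderiv ℝ g 0 p < 0) :
    ∃ ε > (0:ℝ), ∀ t ∈ Set.Ioc (0:ℝ) ε,
      (segment ℝ 0 (t • p) \ {0} ⊆ interior Ω) ∧
      ∃ V : Set (EuclideanSpace ℝ (Fin n)), IsOpen V ∧ segment ℝ 0 (t • p) ⊆ V ∧
        ∀ y ∈ V ∩ interior Ω, segment ℝ y (t • p) ⊆ V ∩ interior Ω := by
  set L := fderiv ℝ g 0 with hLdef
  set c : ℝ := -(L p) with hcdef
  have hc : 0 < c := by simp only [hcdef]; linarith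
  have hp0 : p ≠ 0 := by
    intro h
    rw [h] at hp
    simp at hp
  have hpn : (0:ℝ) < ‖p‖ := norm_pos_iff.mpr hp0
  set M : ℝ := ‖L‖ + 1 with hMdef
  have hM : 0 < M := by positivity
  set k : ℝ := c / (4 * M) with hkdef
  have hk : 0 < k := by positivity
  have hMk : M * k = c / 4 := by
    rw [hkdef]; field_simp
  clear_value k M c L
  have hgdiff : DifferentiableOn ℝ g U := hg.differentiableOn one_ne_zero
  have hfc : ContinuousOn (fderiv ℝ g) U := hg.continuousOn_fderiv_of_isOpen hU le_rfl
  have hcont0 : ContinuousAt (fderiv ℝ g) 0 := hfc.continuousAt (hU.mem_nhds h0U)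
  obtain ⟨δ₁, hδ₁, hδ₁'⟩ := Metric.continuousAt_iff.mp hcont0
    (min 1 (c / (2 * (‖p‖ + 1)))) (by positivity)
  obtain ⟨δ₂, hδ₂, hδ₂'⟩ := Metric.isOpen_iff.mp hU 0 h0U
  set δ : ℝ := min δ₁ δ₂ / 2 with hδdef
  have hδ : 0 < δ := by positivity
  set B : Set (EuclideanSpace ℝ (Fin n)) := Metric.ball 0 (2 * δ) with hBdef
  have h2δ : 2 * δ = min δ₁ δ₂ := by rw [hδdef]; ring
  have hBU : B ⊆ U := by
    intro x hx
    apply hδ₂'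
    rw [Metric.mem_ball]
    rw [hBdef, Metric.mem_ball, h2δ] at hx
    exact lt_of_lt_of_le hx (min_le_right _ _)
  have hBd : ∀ x ∈ B, ‖fderiv ℝ g x - L‖ < min 1 (c / (2 * (‖p‖ + 1))) := by
    intro x hx
    have : dist x 0 < δ₁ := by
      rw [hBdef, Metric.mem_ball, h2δ] at hx
      exact lt_of_lt_of_le hx (min_le_left _ _)
    have := hδ₁' this
    rwa [dist_eq_norm, ← hLdef] at this
  have hfp : ∀ x ∈ B, fderiv ℝ g x p < -(c/2) := by
    intro x hx
    have h1 : (fderiv ℝ g x - L) p ≤ ‖fderiv ℝ g x - L‖ * ‖p‖ :=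
      le_trans (le_abs_self _) ((fderiv ℝ g x - L).le_opNorm p)
    have h2 : ‖fderiv ℝ g x - L‖ < c / (2 * (‖p‖ + 1)) :=
      lt_of_lt_of_le (hBd x hx) (min_le_right _ _)
    have h3 : ‖fderiv ℝ g x - L‖ * ‖p‖ < (c / (2 * (‖p‖ + 1))) * ‖p‖ :=
      mul_lt_mul_of_pos_right h2 hpn
    have h4 : (c / (2 * (‖p‖ + 1))) * ‖p‖ ≤ c / 2 := by
      rw [div_mul_eq_mul_div, div_le_div_iff₀ (by positivity) (by norm_num)]
      nlinarith
    have h5 : (fderiv ℝ g x - L) p = fderiv ℝ g x p - L p := by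
      simp
    have : L p = -c := by rw [hcdef]; ring
    linarith
  have hfM : ∀ x ∈ B, ‖fderiv ℝ g x‖ ≤ M := by
    intro x hx
    have h1 : ‖fderiv ℝ g x - L‖ < 1 := lt_of_lt_of_le (hBd x hx) (min_le_left _ _)
    calc ‖fderiv ℝ g x‖ = ‖L + (fderiv ℝ g x - L)‖ := by rw [add_sub_cancel]
      _ ≤ ‖L‖ + ‖fderiv ℝ g x - L‖ := norm_add_le _ _
      _ ≤ M := by rw [hMdef]; linarith
  have hcone : ∀ x ∈ B, ∀ w : EuclideanSpace ℝ (Fin n), ∀ α : ℝ, 0 < α →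
      ‖w - α • p‖ ≤ k * α → fderiv ℝ g x w < 0 := by
    intro x hx w α hα hw
    have h1 := hfp x hx
    have h2 : |fderiv ℝ g x (w - α • p)| ≤ M * (k * α) := by
      calc |fderiv ℝ g x (w - α • p)| ≤ ‖fderiv ℝ g x‖ * ‖w - α • p‖ :=
            (fderiv ℝ g x).le_opNorm _
        _ ≤ M * (k * α) := mul_le_mul (hfM x hx) hw (norm_nonneg _) hM.le
    have e1 : fderiv ℝ g x (w - α • p) = fderiv ℝ g x w - α * fderiv ℝ g x p := by
      rw [map_sub, map_smul]; simp
    have h3 := (abs_le.mp h2).2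
    have h4 : α * fderiv ℝ g x p < α * (-(c/2)) := mul_lt_mul_of_pos_left h1 hα
    have h5 : M * (k * α) = c / 4 * α := by rw [← mul_assoc, hMk]
    have h6 : α * (-(c/2)) = -(α * c) / 2 := by ring
    have h7 : c / 4 * α = (α * c) / 4 := by ring
    linarith [mul_pos hα hc]
  have hsub : {x | x ∈ U ∧ g x < 0} ⊆ interior Ω := by
    have hopen : IsOpen (U ∩ g ⁻¹' Iio 0) :=
      hgdiff.continuousOn.isOpen_inter_preimage hU isOpen_Iio
    have hsubΩ : U ∩ g ⁻¹' Iio 0 ⊆ Ω := by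
      rw [hΩ]; rintro x ⟨h1, h2⟩; exact ⟨h1, le_of_lt h2⟩
    exact fun x hx => interior_maximal hsubΩ hopen ⟨hx.1, hx.2⟩
  have key : ∀ y w : EuclideanSpace ℝ (Fin n), (∀ μ ∈ Icc (0:ℝ) 1, y + μ • w ∈ B) →
      (∀ μ ∈ Icc (0:ℝ) 1, fderiv ℝ g (y + μ • w) w < 0) →
      StrictAntiOn (fun μ : ℝ => g (y + μ • w)) (Icc 0 1) := by
    intro y w hmem hder
    exact dec_aux hU hgdiff y w (fun μ hμ => hBU (hmem μ hμ)) hder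
  refine ⟨δ / ‖p‖, by positivity, ?_⟩
  intro t ht
  set q : EuclideanSpace ℝ (Fin n) := t • p with hqdef
  have htpos : 0 < t := ht.1
  have hqn : ‖q‖ ≤ δ := by
    rw [hqdef, norm_smul, Real.norm_eq_abs, abs_of_pos htpos]
    calc t * ‖p‖ ≤ (δ / ‖p‖) * ‖p‖ := mul_le_mul_of_nonneg_right ht.2 hpn.le
      _ = δ := by field_simp
  have hqB : ∀ μ : ℝ, |μ| ≤ 1 → μ • q ∈ B := by
    intro μ hμ
    rw [hBdef, Metric.mem_ball, dist_zero_right, norm_smul, Real.norm_eq_abs]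
    calc |μ| * ‖q‖ ≤ 1 * δ := mul_le_mul hμ hqn (norm_nonneg _) one_pos.le
      _ < 2 * δ := by linarith
  have hqmemB : q ∈ B := by simpa using hqB 1 (by norm_num)
  have hseg : segment ℝ (0 : EuclideanSpace ℝ (Fin n)) q
      = (fun μ : ℝ => μ • q) '' Icc 0 1 := by
    rw [segment_eq_image']
    simp
  -- g is negative on (0,1] • q
  have hgneg : ∀ μ : ℝ, μ ∈ Ioc (0:ℝ) 1 → g (μ • q) < 0 := by
    have hanti := key 0 q
      (by intro μ hμ; rw [zero_add]; exact hqB μ (by rw [abs_of_nonneg hμ.1]; exact hμ.2))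
      (by
        intro μ hμ
        have hmem : μ • q ∈ B := hqB μ (by rw [abs_of_nonneg hμ.1]; exact hμ.2)
        have hder : fderiv ℝ g (μ • q) p < -(c/2) := hfp _ (by simpa using hmem)
        have : fderiv ℝ g (0 + μ • q) q = t * fderiv ℝ g (0 + μ • q) p := by
          rw [hqdef, map_smul]; simp
        rw [this]
        have : fderiv ℝ g (0 + μ • q) p < -(c/2) := by simpa using hder
        have := mul_lt_mul_of_pos_left this htpos
        nlinarith [mul_pos htpos hc])
    intro μ hμ
    have := hanti (Set.mem_Icc.mpr ⟨le_refl 0, zero_le_one⟩)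
      (Set.mem_Icc.mpr ⟨hμ.1.le, hμ.2⟩) hμ.1
    simpa [hg0] using this
  have part1 : segment ℝ (0 : EuclideanSpace ℝ (Fin n)) q \ {0} ⊆ interior Ω := by
    intro x hx
    obtain ⟨hx1, hx2⟩ := hx
    rw [hseg] at hx1
    obtain ⟨μ, hμ, rfl⟩ := hx1
    have hμpos : 0 < μ := by
      rcases lt_or_eq_of_le hμ.1 with h | h
      · exact h
      · exfalso; apply hx2; simp [← h]
    apply hsub
    refine ⟨hBU (hqB μ (by rw [abs_of_pos hμpos]; exact hμ.2)), hgneg μ ⟨hμpos, hμ.2⟩⟩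
  have hq0 : q ≠ 0 := smul_ne_zero (ne_of_gt htpos) hp0
  have hqint : q ∈ interior Ω := part1 ⟨right_mem_segment ℝ 0 q, hq0⟩
  have hgq : g q < 0 := by simpa using hgneg 1 ⟨one_pos, le_rfl⟩
  -- small ball around q
  have hgcq : ContinuousAt g q :=
    ((hgdiff q (hBU hqmemB)).differentiableAt (hU.mem_nhds (hBU hqmemB))).continuousAt
  have hnb : g ⁻¹' Iio 0 ∩ B ∈ 𝓝 q := by
    refine Filter.inter_mem (hgcq (Iio_mem_nhds hgq)) ?_
    exact Metric.isOpen_ball.mem_nhds hqmemB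
  obtain ⟨r, hr, hrsub⟩ := Metric.mem_nhds_iff.mp hnb
  -- the cone
  set K : Set (EuclideanSpace ℝ (Fin n)) :=
    ⋃ α ∈ Set.Ioi (0:ℝ), Metric.ball (α • p) (k * α) with hKdef
  have hKopen : IsOpen K := isOpen_biUnion fun α _ => Metric.isOpen_ball
  set V : Set (EuclideanSpace ℝ (Fin n)) :=
    ({x | q - x ∈ K} ∩ B) ∪ Metric.ball q r with hVdef
  have hVopen : IsOpen V := by
    apply IsOpen.union
    · exact (hKopen.preimage (continuous_const.sub continuous_id)).inter Metric.isOpen_ball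
    · exact Metric.isOpen_ball
  refine ⟨part1, V, hVopen, ?_, ?_⟩
  · -- segment ⊆ V
    intro x hx
    rw [hseg] at hx
    obtain ⟨μ, hμ, rfl⟩ := hx
    beta_reduce
    rcases eq_or_lt_of_le hμ.2 with h1 | h1
    · right
      rw [h1, one_smul]
      exact Metric.mem_ball_self hr
    · left
      constructor
      · show q - μ • q ∈ K
        have : q - μ • q = ((1 - μ) * t) • p := by
          rw [hqdef]; rw [smul_smul, ← sub_smul]; ring_nf
        rw [this]
        apply Set.mem_biUnion (show (1 - μ) * t ∈ Set.Ioi (0:ℝ) by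
          simp only [Set.mem_Ioi]; nlinarith)
        rw [Metric.mem_ball, dist_self]
        have : 0 < (1 - μ) * t := by nlinarith
        positivity
      · exact hqB μ (by rw [abs_of_nonneg hμ.1]; exact hμ.2)
  · -- star shape
    rintro y ⟨hyV, hyint⟩ x hx
    rcases hyV with ⟨hyK, hyB⟩ | hyball
    swap
    · -- y in small ball around q
      have hxball : x ∈ Metric.ball q r :=
        (convex_ball q r).segment_subset hyball (Metric.mem_ball_self hr) hx
      have hxB : x ∈ B := (hrsub hxball).2
      refine ⟨Or.inr hxball, hsub ⟨hBU hxB, (hrsub hxball).1⟩⟩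
    · -- y in the cone part
      have hyK' : q - y ∈ K := hyK
      rw [hKdef, Set.mem_iUnion₂] at hyK'
      obtain ⟨α, hα, hyα⟩ := hyK'
      rw [Metric.mem_ball, dist_eq_norm] at hyα
      rw [Set.mem_Ioi] at hα
      set w : EuclideanSpace ℝ (Fin n) := q - y with hwdef
      rw [segment_eq_image'] at hx
      obtain ⟨lam, hlam, rfl⟩ := hx
      beta_reduce
      have hx_eq : y + lam • (q - y) = y + lam • w := rfl
      have hgy : g y ≤ 0 := by
        have := interior_subset hyint
        rw [hΩ] at this
        exact this.2
      have hyU : y ∈ U := hBU hyB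
      have hsegB : ∀ μ ∈ Icc (0:ℝ) 1, y + μ • w ∈ B := by
        intro μ hμ
        have : y + μ • w = (1 - μ) • y + μ • q := by
          rw [hwdef]; module
        rw [this]
        exact (convex_ball _ _) hyB hqmemB (by linarith [hμ.2]) hμ.1 (by ring)
      have hder : ∀ μ ∈ Icc (0:ℝ) 1, fderiv ℝ g (y + μ • w) w < 0 := by
        intro μ hμ
        exact hcone _ (hsegB μ hμ) w α hα hyα.le
      rcases eq_or_lt_of_le hlam.2 with h1 | h1
      · -- lam = 1 : x = q
        have : y + lam • (q - y) = q := by rw [h1]; module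
        rw [this]
        exact ⟨Or.inr (Metric.mem_ball_self hr), hqint⟩
      · constructor
        · -- x ∈ V, cone part
          left
          constructor
          · show q - (y + lam • (q - y)) ∈ K
            have heq : q - (y + lam • (q - y)) = (1 - lam) • w := by
              rw [hwdef]; module
            rw [heq]
            rw [hKdef, Set.mem_iUnion₂]
            refine ⟨(1 - lam) * α, by simp only [Set.mem_Ioi]; nlinarith, ?_⟩
            rw [Metric.mem_ball, dist_eq_norm]
            have : (1 - lam) • w - ((1 - lam) * α) • p = (1 - lam) • (w - α • p) := by
              module
            rw [this, norm_smul, Real.norm_eq_abs, abs_of_pos (by linarith)]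
            calc (1 - lam) * ‖w - α • p‖ < (1 - lam) * (k * α) := by
                  apply mul_lt_mul_of_pos_left hyα (by linarith)
              _ = k * ((1 - lam) * α) := by ring
          · exact hsegB lam hlam
        · -- x ∈ interior Ω
          rcases eq_or_lt_of_le hlam.1 with h0 | h0
          · have : y + lam • (q - y) = y := by rw [← h0]; module
            rw [this]; exact hyint
          · have hanti := key y w hsegB hder
            have hlt : g (y + lam • w) < g (y + (0:ℝ) • w) :=
              hanti (Set.mem_Icc.mpr ⟨le_refl 0, zero_le_one⟩)
                (Set.mem_Icc.mpr ⟨hlam.1, hlam.2⟩) h0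
            have hgx : g (y + lam • w) < 0 := by
              have : g (y + (0:ℝ) • w) = g y := by simp
              rw [this] at hlt
              linarith
            exact hsub ⟨hBU (hsegB lam hlam), hgx⟩
end
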